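/- Let $X$ be a set equipped with a preorder $\sqsubseteq$ such that every $\sqsubseteq$-chain without repetition has length less than some fixed $l \in \omega$. Suppose $f\colon X \to X$ is a surjection such that $f(u) \sqsubseteq u$ for all $u \in X$. Then for every $t \in X$ there is $m > 0$ with $f^{(m)}(t) = t$; consequently $f$ is injective (i.e., $X$ is dually Dedekind finite with respect to such $f$). -/
import Mathlib


/-- If `X` carries a preorder `r` in which every repetition-free descending
chain has length less than `l`, and `f : X → X` is a surjection with
`r (f u) u` for all `u`, then every point is periodic under `f` and `f` is
injective. -/
theorem stmt_16 (X : Type) (r : X → X → Prop)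
    (hrefl : ∀ x, r x x) (htrans : ∀ x y z, r x y → r y z → r x z)
    (l : ℕ)
    (hchain : ∀ h : ℕ → X, (∀ i, r (h (i + 1)) (h i)) →
      ∃ i j, i < j ∧ j < l ∧ h i = h j)
    (f : X → X) (hsurj : Function.Surjective f) (hdec : ∀ u, r (f u) u) :
    (∀ t : X, ∃ m > 0, f^[m] t = t) ∧ Function.Injective f := by
  have hper : ∀ t : X, ∃ m > 0, f^[m] t = t := by
    intro t
    obtain ⟨s, hs⟩ := (hsurj.iterate l) t
    obtain ⟨i, j, hij, hjl, heq⟩ := hchain (fun k => f^[k] s) (fun k => by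
      simpa [Function.iterate_succ_apply'] using hdec (f^[k] s))
    refine ⟨j - i, Nat.sub_pos_of_lt hij, ?_⟩
    have hiter : f^[i + (j - i)] s = f^[i] s := by
      rw [Nat.add_sub_cancel' hij.le]; exact heq.symm
    have hl : i ≤ l := le_of_lt (hij.trans hjl)
    have hls : f^[l + (j - i)] s = f^[l] s := by
      have h1 : l + (j - i) = (l - i) + (i + (j - i)) := by omega
      rw [h1, Function.iterate_add_apply, hiter, ← Function.iterate_add_apply]
      congr 1; omega
    rw [← hs, ← Function.iterate_add_apply, Nat.add_comm, hls]
  refine ⟨hper, ?_⟩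
  intro a b hab
  obtain ⟨m, hm, ha⟩ := hper a
  obtain ⟨n, hn, hb⟩ := hper b
  have ha' : f^[m * n] a = a := by
    rw [Function.iterate_mul]; exact Function.iterate_fixed ha n
  have hb' : f^[m * n] b = b := by
    rw [mul_comm, Function.iterate_mul]; exact Function.iterate_fixed hb m
  obtain ⟨k, hk⟩ : ∃ k, m * n = k + 1 := by
    have := Nat.mul_pos hm hn; exact ⟨m * n - 1, by omega⟩
  rw [hk] at ha' hb'
  calc a = f^[k + 1] a := ha'.symm
    _ = f^[k] (f a) := Function.iterate_succ_apply f k a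
    _ = f^[k] (f b) := by rw [hab]
    _ = f^[k + 1] b := (Function.iterate_succ_apply f k b).symm
    _ = b := hb'
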